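/- arXiv:1802.03304 — 3 statements merged into one kernel-verified Lean document; each statement's English description precedes it below -/
import Mathlib

section
/- If the chain (b_1, …, b_r) of integers with all b_i ≥ 2 is of class T, then so is the chain (2, b_1, …, b_{r−1}, b_r + 1), obtained by prepending an entry 2 and increasing the last entry by 1. -/
/-- The Hirzebruch–Jung continued fraction value [c_1, …, c_t] of a list of
rationals, defined by [c_t] = c_t and [c_i, …, c_t] = c_i − 1/[c_{i+1}, …, c_t].
(For the empty list we set the value to 0; since 1/0 = 0 in ℚ, this gives
`hj [c] = c`.) -/
def hj : List ℚ → ℚ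
  | [] => 0
  | c :: rest => c - 1 / hj rest

/-- A chain (b_1, …, b_r) of integers with all b_i ≥ 2 is of class T if
[b_1, …, b_r] = dn²/(dna − 1) for some integers d ≥ 1, n ≥ 2, 1 ≤ a < n with
gcd(n, a) = 1. -/
def IsClassT (l : List ℤ) : Prop :=
  (∀ b ∈ l, 2 ≤ b) ∧
    ∃ d n a : ℤ, 1 ≤ d ∧ 2 ≤ n ∧ 1 ≤ a ∧ a < n ∧ Int.gcd n a = 1 ∧
      hj (l.map (fun b => (b : ℚ))) = (d * n ^ 2 : ℚ) / (d * n * a - 1)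

lemma hj_cons (c : ℚ) (rest : List ℚ) : hj (c :: rest) = c - 1 / hj rest := rfl

/-- The coercion in `IsClassT` elaborates via the `List` monad; normalize it. -/
lemma map_coe_eq (l : List ℤ) :
    (List.map (fun b => (b : ℚ)) l) = l.map (fun b : ℤ => (b : ℚ)) := by
  induction l with
  | nil => rfl
  | cons k l ih =>
    simp only [List.map_cons, ← ih]
    rfl

/-- Matrix of the Möbius transformation `x ↦ hj (l ++ [x])`, as a tuple
`(a, b, c, d)` meaning `x ↦ (a x + b)/(c x + d)`. -/
def hjA : List ℤ → ℤ × ℤ × ℤ × ℤ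
  | [] => (1, 0, 0, 1)
  | k :: l => (k * (hjA l).1 - (hjA l).2.2.1, k * (hjA l).2.1 - (hjA l).2.2.2,
      (hjA l).1, (hjA l).2.1)

lemma hjA_det (l : List ℤ) :
    (hjA l).1 * (hjA l).2.2.2 - (hjA l).2.1 * (hjA l).2.2.1 = 1 := by
  induction l with
  | nil => simp [hjA]
  | cons k l ih =>
    simp only [hjA]
    linear_combination ih

lemma hjA_inv (l : List ℤ) (h : ∀ b ∈ l, 2 ≤ b) :
    (hjA l).2.2.1 + 1 ≤ (hjA l).1 ∧ 0 ≤ (hjA l).2.2.1 ∧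
    (hjA l).2.2.1 + (hjA l).2.2.2 ≤ (hjA l).1 + (hjA l).2.1 ∧
    1 ≤ (hjA l).2.2.1 + (hjA l).2.2.2 := by
  induction l with
  | nil => simp [hjA]
  | cons k l ih =>
    have hk : 2 ≤ k := h k (by simp)
    obtain ⟨h1, h2, h3, h4⟩ := ih (fun b hb => h b (by simp [hb]))
    simp only [hjA]
    refine ⟨?_, by omega, ?_, by omega⟩
    · nlinarith
    · nlinarith

lemma hjA_eval (l : List ℤ) (h : ∀ b ∈ l, 2 ≤ b) (x : ℚ) (hx : 1 ≤ x) :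
    hj (l.map (fun b : ℤ => (b : ℚ)) ++ [x]) =
      ((hjA l).1 * x + (hjA l).2.1) / ((hjA l).2.2.1 * x + (hjA l).2.2.2) := by
  induction l with
  | nil => simp [hj, hjA]
  | cons k l ih =>
    have hk : 2 ≤ k := h k (by simp)
    have h' : ∀ b ∈ l, 2 ≤ b := fun b hb => h b (by simp [hb])
    obtain ⟨h1, h2, h3, h4⟩ := hjA_inv l h'
    have hnum : (0 : ℚ) < (hjA l).1 * x + (hjA l).2.1 := by
      have hA : (1 : ℚ) ≤ ((hjA l).1 : ℚ) := by exact_mod_cast by omega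
      have hAB : (1 : ℚ) ≤ ((hjA l).1 : ℚ) + (hjA l).2.1 := by exact_mod_cast by omega
      nlinarith
    rw [List.map_cons, List.cons_append, hj_cons, ih h', one_div_div]
    show _ = (((hjA (k :: l)).1 : ℚ) * x + ((hjA (k :: l)).2.1 : ℚ)) /
      (((hjA (k :: l)).2.2.1 : ℚ) * x + ((hjA (k :: l)).2.2.2 : ℚ))
    simp only [hjA]
    push_cast
    have hnum' : (x * ((hjA l).1 : ℚ) + (hjA l).2.1) ≠ 0 := by rw [mul_comm]; exact hnum.ne'
    field_simp
    ring

/-- Equality of fractions in lowest terms with positive denominators. -/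
lemma frac_unique (p q p' q' : ℤ) (hq : 0 < q) (hq' : 0 < q')
    (hc : IsCoprime p q) (hc' : IsCoprime p' q')
    (heq : (p : ℚ) / q = (p' : ℚ) / q') : p = p' ∧ q = q' := by
  have hq0 : (q : ℚ) ≠ 0 := by exact_mod_cast hq.ne'
  have hq0' : (q' : ℚ) ≠ 0 := by exact_mod_cast hq'.ne'
  have hcross : p * q' = p' * q := by
    have := (div_eq_div_iff hq0 hq0').1 heq
    exact_mod_cast this
  have hdvd : q ∣ q' := by
    have h1 : q ∣ p * q' := ⟨p', by linarith⟩
    exact hc.symm.dvd_of_dvd_mul_left h1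
  have hdvd' : q' ∣ q := by
    have h1 : q' ∣ p' * q := ⟨p, by linarith⟩
    exact hc'.symm.dvd_of_dvd_mul_left h1
  have hqq : q = q' := Int.dvd_antisymm hq.le hq'.le hdvd hdvd'
  refine ⟨?_, hqq⟩
  rw [hqq] at hcross
  exact mul_right_cancel₀ hq'.ne' hcross

set_option maxHeartbeats 1000000 in
/-- If the chain (b_1, …, b_r) with all b_i ≥ 2 is of class T, then so is the
chain (2, b_1, …, b_{r−1}, b_r + 1), obtained by prepending an entry 2 and
increasing the last entry by 1. -/
theorem classT_prepend_two (l : List ℤ) (hne : l ≠ [])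
    (h2 : ∀ b ∈ l, 2 ≤ b) (hT : IsClassT l) :
    IsClassT (2 :: (l.dropLast ++ [l.getD (l.length - 1) 0 + 1])) := by
  obtain ⟨L, m, rfl⟩ : ∃ L m, l = L ++ [m] := by
    rcases List.eq_nil_or_concat l with h | ⟨L, m, h⟩
    · exact absurd h hne
    · exact ⟨L, m, by simpa [List.concat_eq_append] using h⟩
  obtain ⟨-, d, n, a0, hd, hn, ha1, han, hg, hval⟩ := hT
  have hdl : (L ++ [m]).dropLast = L := by simp
  have hgetD : (L ++ [m]).getD ((L ++ [m]).length - 1) 0 = m := by simp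
  rw [hdl, hgetD]
  have hL2 : ∀ b ∈ L, 2 ≤ b := fun b hb => h2 b (by simp [hb])
  have hm2 : 2 ≤ m := h2 m (by simp)
  obtain ⟨i1, i2, i3, i4⟩ := hjA_inv L hL2
  have hdet := hjA_det L
  have heval := hjA_eval L hL2 (m : ℚ) (by exact_mod_cast by omega)
  have heval2 := hjA_eval L hL2 ((m : ℚ) + 1) (by exact_mod_cast by omega : (1:ℚ) ≤ (m:ℚ) + 1)
  rw [map_coe_eq, List.map_append, List.map_singleton, heval] at hval
  set a := (hjA L).1 with ha
  set b := (hjA L).2.1 with hb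
  set c := (hjA L).2.2.1 with hc
  set dd := (hjA L).2.2.2 with hdd
  clear_value a b c dd
  clear ha hb hc hdd
  -- basic positivity facts
  have hdn : 2 ≤ d * n := by nlinarith
  have hQpos : 0 < d * n * a0 - 1 := by
    nlinarith [mul_le_mul_of_nonneg_left ha1 (by omega : (0:ℤ) ≤ d * n)]
  have hPQ3 : d * n * a0 - 1 + 3 ≤ d * n ^ 2 := by
    nlinarith [mul_le_mul_of_nonneg_left (by omega : (1:ℤ) ≤ n - a0) (by omega : (0:ℤ) ≤ d * n)]
  -- coprimality
  have hcopna : IsCoprime n a0 := Int.isCoprime_iff_gcd_eq_one.2 hg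
  have hcopP : IsCoprime (d * n ^ 2) (d * n * a0 - 1) :=
    ⟨d * a0 ^ 2, -(d * n * a0 + 1), by ring⟩
  have hQmpos : 0 < c * m + dd := by nlinarith
  have hPmpos : a + 1 ≤ a * m + b := by nlinarith
  have hcopPm : IsCoprime (a * m + b) (c * m + dd) :=
    ⟨-c, a, by linear_combination hdet⟩
  -- identify numerator and denominator
  have hids : a * m + b = d * n ^ 2 ∧ c * m + dd = d * n * a0 - 1 := by
    apply frac_unique _ _ _ _ hQmpos hQpos hcopPm hcopP
    push_cast
    exact hval
  obtain ⟨hP, hQ⟩ := hids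
  set P : ℤ := d * n ^ 2 with hPdef
  set Q : ℤ := d * n * a0 - 1 with hQdef
  set R : ℤ := d * a0 ^ 2 with hRdef
  have key2 : (P - Q - 2) * Q - (Q - R) * P = 1 := by
    rw [hPdef, hQdef, hRdef]; ring
  clear_value P Q R
  have key1 : a * Q - c * P = 1 := by
    rw [← hP, ← hQ]; linear_combination hdet
  -- uniqueness of the inverse mod P : a = P - Q - 2, c = Q - R
  have hPpos : 0 < P := by omega
  have hPdvd : P ∣ (a - (P - Q - 2)) := by
    have h1 : P ∣ (a - (P - Q - 2)) * Q :=
      ⟨c - (Q - R), by linear_combination key1 - key2⟩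
    exact hcopP.dvd_of_dvd_mul_right h1
  have haP : a ≤ P - 1 := by nlinarith
  have ha1' : 1 ≤ a := by omega
  have haeq : a = P - Q - 2 := by
    obtain ⟨k, hk⟩ := hPdvd
    have hk0 : k = 0 := by
      by_contra h0
      have h1 : P ≤ |P * k| := by
        rw [abs_mul, abs_of_pos hPpos]
        nlinarith [Int.one_le_abs h0, abs_nonneg k]
      rw [← hk] at h1
      have habs : |a - (P - Q - 2)| ≤ P - 2 := abs_le.2 ⟨by omega, by omega⟩
      linarith
    rw [hk0, mul_zero] at hk
    omega
  have hceq : c = Q - R := by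
    have h1 : (a - (P - Q - 2)) * Q = (c - (Q - R)) * P := by
      linear_combination key1 - key2
    rw [haeq, sub_self, zero_mul] at h1
    have := (mul_eq_zero.1 h1.symm).resolve_right hPpos.ne'
    omega
  -- entries of the new chain
  refine ⟨?_, d, 2 * n - a0, n, hd, by omega, by omega, by omega, ?_, ?_⟩
  · intro x hx
    simp only [List.mem_cons, List.mem_append] at hx
    rcases hx with rfl | hx | hx
    · norm_num
    · exact hL2 x hx
    · have : x = m + 1 := by simpa using hx
      omega
  · rw [← Int.isCoprime_iff_gcd_eq_one]
    have h1 : IsCoprime (-a0) n := hcopna.symm.neg_left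
    have h2' := h1.add_mul_right_left 2
    rwa [show (2 * n - a0 : ℤ) = -a0 + 2 * n from by ring]
  -- value of the new chain
  · rw [map_coe_eq]
    simp only [List.map_cons, List.map_append, List.map_singleton, List.map_nil]
    rw [show ((m + 1 : ℤ) : ℚ) = (m : ℚ) + 1 by push_cast; ring, hj_cons, heval2, one_div_div]
    -- cast identities
    have hPq : (a : ℚ) * m + b = (P : ℚ) := by exact_mod_cast congrArg (fun z : ℤ => (z : ℚ)) hP
    have hQq : (c : ℚ) * m + dd = (Q : ℚ) := by exact_mod_cast congrArg (fun z : ℤ => (z : ℚ)) hQ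
    have haq : (a : ℚ) = (P : ℚ) - Q - 2 := by exact_mod_cast congrArg (fun z : ℤ => (z : ℚ)) haeq
    have hcq : (c : ℚ) = (Q : ℚ) - R := by exact_mod_cast congrArg (fun z : ℤ => (z : ℚ)) hceq
    have e1 : (a : ℚ) * ((m : ℚ) + 1) + b = 2 * (P : ℚ) - Q - 2 := by
      linear_combination hPq + haq
    have e2 : (c : ℚ) * ((m : ℚ) + 1) + dd = 2 * (Q : ℚ) - R := by
      linear_combination hQq + hcq
    rw [e1, e2]
    have hPc : (P : ℚ) = (d : ℚ) * n ^ 2 := by rw [hPdef]; push_cast; ring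
    have hQc : (Q : ℚ) = (d : ℚ) * n * a0 - 1 := by rw [hQdef]; push_cast; ring
    have hRc : (R : ℚ) = (d : ℚ) * a0 ^ 2 := by rw [hRdef]; push_cast; ring
    rw [hPc, hQc, hRc]
    have hden1 : (2 * ((d:ℚ) * n ^ 2) - ((d:ℚ) * n * a0 - 1) - 2) ≠ 0 := by
      have h0 : (0:ℤ) < 2 * (d * n ^ 2) - (d * n * a0 - 1) - 2 := by omega
      have := (@Int.cast_pos ℚ _ _).2 h0
      push_cast at this
      intro h; rw [h] at this; exact lt_irrefl 0 this
    have hden2 : ((d : ℚ) * (2 * n - a0 : ℤ) * n - 1) ≠ 0 := by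
      have h0 : (0:ℤ) < d * (2 * n - a0) * n - 1 := by
        nlinarith [mul_le_mul_of_nonneg_left (by omega : (1:ℤ) ≤ 2 * n - a0) (by omega : (0:ℤ) ≤ d * n)]
      have := (@Int.cast_pos ℚ _ _).2 h0
      push_cast at this
      push_cast
      intro h; rw [h] at this; exact lt_irrefl 0 this
    push_cast
    push_cast at hden2
    rw [sub_div' hden1, div_eq_div_iff hden1 hden2]
    ring
end

section
/- Let G be a group and let x, a_1, a_2, a_3, a_4, a_5, c_2, c_5 ∈ G satisfy: (i) the elements a_1, a_2, a_3, a_4, a_5, c_2, c_5 pairwise commute; (ii) x commutes with each of a_1, a_4, a_5, and c_5; (iii) the braid relation x·a_3·x = a_3·x·a_3 holds. Set y = (a_2·c_2)·x·(a_2·c_2)⁻¹ and f = x·a_3·x⁻². Then f·(x·y·c_2·c_2·a_1·a_2·a_3·a_4·a_5·c_5)·f⁻¹ = (x·a_3·x⁻¹)·a_2·c_2·a_3·a_3·a_1·a_4·a_5·(f·c_2·f⁻¹)·c_5. (This is the group-theoretic identity underlying the Hurwitz-move and global-conjugation computation transforming the monodromy factorization x y γ_2² α_1α_2α_3α_4α_5γ_5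 of the minimal resolution of the icosahedral singularity I_{30(2−2)+29} into t_x(α_3) α_2 γ_2 α_3² α_1 α_4 α_5 f(γ_2) γ_5.) -/
/-- The group-theoretic identity underlying the Hurwitz-move and
global-conjugation computation transforming the monodromy factorization
x y γ_2² α_1α_2α_3α_4α_5γ_5 of the minimal resolution of the icosahedral
singularity I_{30(2−2)+29} into t_x(α_3) α_2 γ_2 α_3² α_1 α_4 α_5 f(γ_2) γ_5,
where y = t_{α_2}(t_{γ_2}(x)) and f = t_x ∘ t_{α_3} ∘ t_x⁻². -/
theorem icosahedral_monodromy_identity {G : Type*} [Group G]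
    (x a1 a2 a3 a4 a5 c2 c5 : G)
    (hpair : ∀ g ∈ ({a1, a2, a3, a4, a5, c2, c5} : Set G),
      ∀ g' ∈ ({a1, a2, a3, a4, a5, c2, c5} : Set G), Commute g g')
    (hx1 : Commute x a1) (hx4 : Commute x a4) (hx5 : Commute x a5)
    (hxc5 : Commute x c5)
    (hbraid : x * a3 * x = a3 * x * a3) :
    (x * a3 * x⁻¹ * x⁻¹) *
        (x * ((a2 * c2) * x * (a2 * c2)⁻¹) * c2 * c2 * a1 * a2 * a3 * a4 * a5 * c5) *
        (x * a3 * x⁻¹ * x⁻¹)⁻¹ =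
      (x * a3 * x⁻¹) * a2 * c2 * a3 * a3 * a1 * a4 * a5 *
        ((x * a3 * x⁻¹ * x⁻¹) * c2 * (x * a3 * x⁻¹ * x⁻¹)⁻¹) * c5 := by
  have C : ∀ g g', g ∈ ({a1,a2,a3,a4,a5,c2,c5} : Set G) → g' ∈ ({a1,a2,a3,a4,a5,c2,c5} : Set G) → Commute g g' := fun g g' h h' => hpair g h g' h'
  have h23 := C a2 a3 (by simp) (by simp)
  have h2c2 := C a2 c2 (by simp) (by simp)
  have h3c2 := C a3 c2 (by simp) (by simp)
  have h12 := C a1 a2 (by simp) (by simp)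
  have h13 := C a1 a3 (by simp) (by simp)
  have h1c2 := C a1 c2 (by simp) (by simp)
  have h14 := C a1 a4 (by simp) (by simp)
  have h15 := C a1 a5 (by simp) (by simp)
  have h1c5 := C a1 c5 (by simp) (by simp)
  have h24 := C a2 a4 (by simp) (by simp)
  have h25 := C a2 a5 (by simp) (by simp)
  have h2c5 := C a2 c5 (by simp) (by simp)
  have h34 := C a3 a4 (by simp) (by simp)
  have h35 := C a3 a5 (by simp) (by simp)
  have h3c5 := C a3 c5 (by simp) (by simp)
  have h45 := C a4 a5 (by simp) (by simp)
  have h4c2 := C a4 c2 (by simp) (by simp)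
  have h4c5 := C a4 c5 (by simp) (by simp)
  have h5c2 := C a5 c2 (by simp) (by simp)
  have h5c5 := C a5 c5 (by simp) (by simp)
  have hc2c5 := C c2 c5 (by simp) (by simp)
  have lc : ∀ {a b : G}, Commute a b → ∀ z : G, a * (b * z) = b * (a * z) :=
    fun {a b} h z => by rw [← mul_assoc, h.eq, mul_assoc]
  have hkey : x * a3 * x * x = a3 * a3 * x * a3 := by
    have h2 : a3 * x * a3 * x = a3 * (x * a3 * x) := by group
    rw [hbraid] at h2
    rw [hbraid, h2]; group
  have key : ∀ z : G, a3 * (a3 * (x * (a3 * z))) = x * (a3 * (x * (x * z))) := by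
    intro z
    calc a3 * (a3 * (x * (a3 * z))) = (a3 * a3 * x * a3) * z := by group
    _ = (x * a3 * x * x) * z := by rw [hkey]
    _ = x * (a3 * (x * (x * z))) := by group
  have key2 : ∀ z : G, a3 * (a3 * (a2 * (a1 * (x * (a3 * z))))) =
      a2 * (a1 * (x * (a3 * (x * (x * z))))) := by
    intro z
    rw [← key]
    simp only [lc h23, lc h13]
  have hop5 : ∀ z : G, x * (c2 * (a5 * z)) = a5 * (x * (c2 * z)) := by
    intro z; rw [lc h5c2.symm, lc hx5.symm]
  have hop4 : ∀ z : G, x * (c2 * (a4 * z)) = a4 * (x * (c2 * z)) := by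
    intro z; rw [lc h4c2.symm, lc hx4.symm]
  have hop1 : ∀ z : G, x * (c2 * (a3 * (a1 * z))) = a1 * (x * (c2 * (a3 * z))) := by
    intro z; rw [lc h13.symm, lc h1c2.symm, lc hx1.symm]
  simp only [mul_assoc, mul_inv_rev, inv_inv]
  simp only [key, key2, hop5, hop4, hop1, lc h23, lc h2c2, lc h3c2, lc h12, lc h13, lc h1c2, lc h14, lc h15,
    lc h1c5, lc h24, lc h25, lc h2c5, lc h34, lc h35, lc h3c5, lc h45, lc h4c2,
    lc h4c5, lc h5c2, lc h5c5, lc hc2c5, lc hx1, lc hx4, lc hx5, lc hxc5,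
    lc h23.inv_left, lc h2c2.inv_left, lc h3c2.inv_right, lc h12.inv_right,
    lc h13.inv_right, lc h1c2.inv_right, lc hx1.inv_left, lc hx4.inv_left,
    lc hx5.inv_left, lc hxc5.inv_left, lc h13.inv_left.inv_right,
    lc h2c2.inv_right, lc h24.inv_left, lc h25.inv_left, lc h2c5.inv_left,
    lc h4c2.inv_right, lc h5c2.inv_right, lc hc2c5.inv_left,
    lc h34.inv_left, lc h35.inv_left, lc h3c5.inv_left,
    h23.eq, h2c2.eq, h3c2.eq, h12.eq, h13.eq, h1c2.eq, h14.eq, h15.eq, h1c5.eq,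
    h24.eq, h25.eq, h2c5.eq, h34.eq, h35.eq, h3c5.eq, h45.eq, h4c2.eq, h4c5.eq,
    h5c2.eq, h5c5.eq, hc2c5.eq, hx1.eq, hx4.eq, hx5.eq, hxc5.eq,
    hx1.inv_left.eq, hx4.inv_left.eq, hx5.inv_left.eq, hxc5.inv_left.eq,
    h13.inv_right.eq, h23.inv_right.eq, h3c2.inv_left.eq, h34.inv_right.eq,
    h35.inv_right.eq, h3c5.inv_right.eq,
    mul_inv_cancel_left, inv_mul_cancel_left, inv_mul_cancel, mul_inv_cancel,
    one_mul, mul_one]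
end

section
/- Let G be a group and let x, a_1, a_2, a_3, a_4, c_3, c_4 ∈ G satisfy: (i) the elements a_1, a_2, a_3, a_4, c_3, c_4 pairwise commute; (ii) x commutes with each of a_1, a_2, and c_4; (iii) the braid relation x·a_4·x = a_4·x·a_4 holds. Set y = (a_3·c_3)·x·(a_3·c_3)⁻¹ and f = x·a_4·x⁻². Then f·(x·y·c_3·c_3·a_1·a_2·a_3·a_4·c_4)·f⁻¹ = (x·a_4·x⁻¹)·a_3·c_3·a_4·a_4·a_1·a_2·(f·c_3·f⁻¹)·c_4. (This is the group-theoretic identity underlying the Hurwitz-move and global-conjugation computation transforming the monodromy factorization x y γ_3² α_1α_2α_3α_4γ_4 of the minimal resolution of the octahedral singularity O_{12(2−2)+11} into t_x(α_4) α_3 γ_3 α_4² α_1 α_2 f(γ_3) γ_4.) -/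
private lemma sw {G : Type*} [Group G] {a b : G} (h : Commute a b) (c : G) :
    a * (b * c) = b * (a * c) := by rw [← mul_assoc, h.eq, mul_assoc]

/-- The group-theoretic identity underlying the Hurwitz-move and
global-conjugation computation transforming the monodromy factorization
x y γ_3² α_1α_2α_3α_4γ_4 of the minimal resolution of the octahedral
singularity O_{12(2−2)+11} into t_x(α_4) α_3 γ_3 α_4² α_1 α_2 f(γ_3) γ_4,
where y = t_{α_3}(t_{γ_3}(x)) and f = t_x ∘ t_{α_4} ∘ t_x⁻². -/
theorem octahedral_monodromy_identity {G : Type*} [Group G]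
    (x a1 a2 a3 a4 c3 c4 : G)
    (hpair : ∀ g ∈ ({a1, a2, a3, a4, c3, c4} : Set G),
      ∀ g' ∈ ({a1, a2, a3, a4, c3, c4} : Set G), Commute g g')
    (hx1 : Commute x a1) (hx2 : Commute x a2) (hxc4 : Commute x c4)
    (hbraid : x * a4 * x = a4 * x * a4) :
    (x * a4 * x⁻¹ * x⁻¹) *
        (x * ((a3 * c3) * x * (a3 * c3)⁻¹) * c3 * c3 * a1 * a2 * a3 * a4 * c4) *
        (x * a4 * x⁻¹ * x⁻¹)⁻¹ =
      (x * a4 * x⁻¹) * a3 * c3 * a4 * a4 * a1 * a2 *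
        ((x * a4 * x⁻¹ * x⁻¹) * c3 * (x * a4 * x⁻¹ * x⁻¹)⁻¹) * c4 := by
  have h13 : Commute a1 a3 := hpair a1 (by simp) a3 (by simp)
  have h23 : Commute a2 a3 := hpair a2 (by simp) a3 (by simp)
  have hc33 : Commute c3 a3 := hpair c3 (by simp) a3 (by simp)
  have hc31 : Commute c3 a1 := hpair c3 (by simp) a1 (by simp)
  have hc32 : Commute c3 a2 := hpair c3 (by simp) a2 (by simp)
  have h41 : Commute a4 a1 := hpair a4 (by simp) a1 (by simp)
  have h42 : Commute a4 a2 := hpair a4 (by simp) a2 (by simp)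
  have h4c3 : Commute a4 c3 := hpair a4 (by simp) c3 (by simp)
  have h4c4 : Commute a4 c4 := hpair a4 (by simp) c4 (by simp)
  have hb0 : x * (a4 * x) = a4 * (x * a4) := by rw [← mul_assoc, hbraid, mul_assoc]
  have hb2 : x * a4 * x * x = a4 * (a4 * (x * a4)) := by
    rw [hbraid, mul_assoc, mul_assoc, hb0]
  have key : ∀ r : G, a4 * (a4 * (x * (a4 * (x⁻¹ * (x⁻¹ * r))))) = x * (a4 * r) := by
    intro r
    have : a4 * (a4 * (x * (a4 * (x⁻¹ * (x⁻¹ * r))))) =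
        (x * a4 * x * x) * (x⁻¹ * (x⁻¹ * r)) := by
      rw [hb2]; simp only [mul_assoc]
    rw [this]; simp only [mul_assoc, mul_inv_cancel_left, mul_inv_cancel]
  simp only [mul_inv_rev, inv_inv, mul_assoc, inv_mul_cancel_left, mul_inv_cancel_left]
  -- LHS tail rearrangement
  rw [sw h23, sw h13, sw hc33, sw hc33, inv_mul_cancel_left, inv_mul_cancel_left,
    sw hc31, sw hx1, sw hc32, sw hx2]
  -- RHS tail rearrangement
  rw [sw h41, sw h41, sw h42, sw h42, key, sw h4c3]
  -- move c4 to the end on the LHS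
  rw [sw hxc4.symm, sw hxc4.symm, sw (h4c4.symm.inv_right), (hxc4.symm.inv_right).eq]
end
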